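/- For independent circularly symmetric complex random variables U, V with finite even moments: E|U+V|^{2m} = Σ_{n=0}^m binom(m,n)²·E|U|^{2n}·E|V|^{2(m-n)}. -/

import Mathlib

open MeasureTheory

/-- A complex random variable is circularly symmetric if its distribution is invariant
under multiplication by any unit complex number. -/
def CircSymm {Ω : Type*} [MeasurableSpace Ω] (μ : Measure Ω) (U : Ω → ℂ) : Prop :=
  ∀ θ : ℝ, Measure.map (fun ω => Complex.exp (θ * Complex.I) * U ω) μ = Measure.map U μ

private lemma abs_pow_eq (z : ℂ) (n : ℕ) :
    ((‖z‖ ^ (2 * n) : ℝ) : ℂ) = z ^ n * (starRingEnd ℂ z) ^ n := by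
  rw [← mul_pow, Complex.mul_conj]
  norm_cast
  rw [pow_mul, Complex.sq_norm]

private lemma circ_offdiag {Ω : Type*} [MeasurableSpace Ω] {μ : Measure Ω} {U : Ω → ℂ}
    (hU : Measurable U) (hc : CircSymm μ U) {a b : ℕ} (hab : a ≠ b) :
    ∫ ω, (U ω) ^ a * (starRingEnd ℂ (U ω)) ^ b ∂μ = 0 := by
  have hd : (a : ℝ) - b ≠ 0 := sub_ne_zero.2 (by exact_mod_cast hab)
  set θ : ℝ := Real.pi / ((a : ℝ) - b) with hθ
  have hg : Measurable (fun z : ℂ => z ^ a * (starRingEnd ℂ z) ^ b) :=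
    (measurable_id.pow_const a).mul (Complex.continuous_conj.measurable.pow_const b)
  have key : ∫ ω, (Complex.exp (θ * Complex.I) * U ω) ^ a *
      (starRingEnd ℂ (Complex.exp (θ * Complex.I) * U ω)) ^ b ∂μ
      = ∫ ω, (U ω) ^ a * (starRingEnd ℂ (U ω)) ^ b ∂μ := by
    rw [← integral_map (hU.const_mul _).aemeasurable hg.aestronglyMeasurable,
        ← integral_map hU.aemeasurable hg.aestronglyMeasurable, hc θ]
  have hfac : (Complex.exp (θ * Complex.I)) ^ a *
      (starRingEnd ℂ (Complex.exp (θ * Complex.I))) ^ b = -1 := by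
    rw [← Complex.exp_conj]
    have hconj : (starRingEnd ℂ) ((θ : ℂ) * Complex.I) = -((θ : ℂ) * Complex.I) := by
      simp [Complex.conj_I]
    rw [hconj, ← Complex.exp_nat_mul, ← Complex.exp_nat_mul, ← Complex.exp_add]
    have : (a : ℂ) * ((θ : ℂ) * Complex.I) + (b : ℂ) * -((θ : ℂ) * Complex.I)
        = (((((a : ℝ) - b) * θ : ℝ)) : ℂ) * Complex.I := by
      push_cast; ring
    rw [this]
    have : ((a : ℝ) - b) * θ = Real.pi := by
      rw [hθ, mul_div_cancel₀ _ hd]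
    rw [this, Complex.exp_pi_mul_I]
  have hpt : ∀ ω, (Complex.exp (θ * Complex.I) * U ω) ^ a *
      (starRingEnd ℂ (Complex.exp (θ * Complex.I) * U ω)) ^ b
      = -((U ω) ^ a * (starRingEnd ℂ (U ω)) ^ b) := by
    intro ω
    rw [mul_pow, map_mul, mul_pow]
    have : Complex.exp (θ * Complex.I) ^ a * (U ω) ^ a *
        ((starRingEnd ℂ (Complex.exp (θ * Complex.I))) ^ b * (starRingEnd ℂ (U ω)) ^ b)
        = (Complex.exp (θ * Complex.I) ^ a * (starRingEnd ℂ (Complex.exp (θ * Complex.I))) ^ b) *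
          ((U ω) ^ a * (starRingEnd ℂ (U ω)) ^ b) := by ring
    rw [this, hfac]; ring
  simp_rw [hpt, integral_neg] at key
  have : (2 : ℂ) * ∫ ω, (U ω) ^ a * (starRingEnd ℂ (U ω)) ^ b ∂μ = 0 := by
    linear_combination -key
  simpa using this

private lemma indep_integral_mul_complex {Ω : Type*} [MeasurableSpace Ω] {μ : Measure Ω}
    [IsProbabilityMeasure μ] {X Y : Ω → ℂ} (h : ProbabilityTheory.IndepFun X Y μ)
    (hX : Measurable X) (hY : Measurable Y) :
    ∫ ω, X ω * Y ω ∂μ = (∫ ω, X ω ∂μ) * ∫ ω, Y ω ∂μ := by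
  have hmap := (ProbabilityTheory.indepFun_iff_map_prod_eq_prod_map_map
    hX.aemeasurable hY.aemeasurable).1 h
  haveI : IsProbabilityMeasure (Measure.map X μ) := Measure.isProbabilityMeasure_map hX.aemeasurable
  haveI : IsProbabilityMeasure (Measure.map Y μ) := Measure.isProbabilityMeasure_map hY.aemeasurable
  have h1 : ∫ p : ℂ × ℂ, p.1 * p.2 ∂(Measure.map (fun ω => (X ω, Y ω)) μ)
      = ∫ ω, X ω * Y ω ∂μ :=
    integral_map (hX.prodMk hY).aemeasurable
      (Continuous.aestronglyMeasurable (continuous_fst.mul continuous_snd))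
  rw [← h1, hmap, MeasureTheory.integral_prod_mul (f := fun x : ℂ => x) (g := fun y : ℂ => y)]
  congr 1
  · exact integral_map hX.aemeasurable measurable_id.aestronglyMeasurable
  · exact integral_map hY.aemeasurable measurable_id.aestronglyMeasurable

private lemma term_integrable {Ω : Type*} [MeasurableSpace Ω] {μ : Measure Ω}
    {U V : Ω → ℂ} (hU : Measurable U) (hV : Measurable V)
    (hUV : ProbabilityTheory.IndepFun U V μ) {m a b c d : ℕ}
    (hab : a + b ≤ 2 * m) (hcd : c + d ≤ 2 * m)
    (hUm : ∀ k ≤ 2 * m, Integrable (fun ω => ‖U ω‖ ^ k) μ)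
    (hVm : ∀ k ≤ 2 * m, Integrable (fun ω => ‖V ω‖ ^ k) μ) :
    Integrable (fun ω => ((U ω) ^ a * (starRingEnd ℂ (U ω)) ^ b) *
      ((V ω) ^ c * (starRingEnd ℂ (V ω)) ^ d)) μ := by
  have hind : ProbabilityTheory.IndepFun (fun ω => ‖U ω‖ ^ (a + b))
      (fun ω => ‖V ω‖ ^ (c + d)) μ :=
    hUV.comp (φ := fun z : ℂ => ‖z‖ ^ (a + b))
      (ψ := fun z : ℂ => ‖z‖ ^ (c + d))
      (continuous_norm.measurable.pow_const _)
      (continuous_norm.measurable.pow_const _)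
  have hint := hind.integrable_mul (hUm _ hab) (hVm _ hcd)
  have hmeas : Measurable (fun ω => ((U ω) ^ a * (starRingEnd ℂ (U ω)) ^ b) *
      ((V ω) ^ c * (starRingEnd ℂ (V ω)) ^ d)) :=
    ((hU.pow_const a).mul ((Complex.continuous_conj.measurable.comp hU).pow_const b)).mul
      ((hV.pow_const c).mul ((Complex.continuous_conj.measurable.comp hV).pow_const d))
  refine hint.mono' hmeas.aestronglyMeasurable ?_
  filter_upwards with ω
  refine le_of_eq ?_
  simp only [Pi.mul_apply, norm_mul, norm_pow, Complex.norm_conj]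
  rw [pow_add, pow_add]

theorem moment_convolution {Ω : Type*} [MeasurableSpace Ω] (μ : Measure Ω)
    [IsProbabilityMeasure μ] (U V : Ω → ℂ)
    (hU : Measurable U) (hV : Measurable V)
    (hUV : ProbabilityTheory.IndepFun U V μ)
    (hUc : CircSymm μ U) (hVc : CircSymm μ V) (m : ℕ)
    (hUm : ∀ k ≤ 2 * m, Integrable (fun ω => ‖U ω‖ ^ k) μ)
    (hVm : ∀ k ≤ 2 * m, Integrable (fun ω => ‖V ω‖ ^ k) μ) :
    (∫ ω, ‖U ω + V ω‖ ^ (2 * m) ∂μ)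
      = ∑ n ∈ Finset.range (m + 1), (m.choose n : ℝ) ^ 2 *
          (∫ ω, ‖U ω‖ ^ (2 * n) ∂μ) *
          (∫ ω, ‖V ω‖ ^ (2 * (m - n)) ∂μ) := by
  -- the complex-valued central integral
  set Ic : ℂ := ∫ ω, (U ω + V ω) ^ m * (starRingEnd ℂ (U ω + V ω)) ^ m ∂μ with hIc
  -- expand into double sum
  have hterm_int : ∀ a ∈ Finset.range (m + 1), ∀ b ∈ Finset.range (m + 1),
      Integrable (fun ω => ((U ω) ^ a * (starRingEnd ℂ (U ω)) ^ b) *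
        ((V ω) ^ (m - a) * (starRingEnd ℂ (V ω)) ^ (m - b))) μ := by
    intro a ha b hb
    simp only [Finset.mem_range, Nat.lt_succ_iff] at ha hb
    exact term_integrable hU hV hUV (by omega) (by omega) hUm hVm
  have hexp : ∀ ω, (U ω + V ω) ^ m * (starRingEnd ℂ (U ω + V ω)) ^ m
      = ∑ a ∈ Finset.range (m + 1), ∑ b ∈ Finset.range (m + 1),
        ((m.choose a : ℂ) * (m.choose b : ℂ)) *
        (((U ω) ^ a * (starRingEnd ℂ (U ω)) ^ b) *
          ((V ω) ^ (m - a) * (starRingEnd ℂ (V ω)) ^ (m - b))) := by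
    intro ω
    rw [map_add, add_pow, add_pow, Finset.sum_mul_sum]
    refine Finset.sum_congr rfl fun a _ => Finset.sum_congr rfl fun b _ => by ring
  have hIc2 : Ic = ∑ a ∈ Finset.range (m + 1), ∑ b ∈ Finset.range (m + 1),
      ((m.choose a : ℂ) * (m.choose b : ℂ)) *
      ((∫ ω, (U ω) ^ a * (starRingEnd ℂ (U ω)) ^ b ∂μ) *
        (∫ ω, (V ω) ^ (m - a) * (starRingEnd ℂ (V ω)) ^ (m - b) ∂μ)) := by
    rw [hIc]
    simp_rw [hexp]
    rw [integral_finset_sum _ (fun a ha => by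
      exact integrable_finset_sum _ (fun b hb => ((hterm_int a ha b hb).const_mul _)))]
    refine Finset.sum_congr rfl fun a ha => ?_
    rw [integral_finset_sum _ (fun b hb => (hterm_int a ha b hb).const_mul _)]
    refine Finset.sum_congr rfl fun b hb => ?_
    rw [integral_const_mul]
    congr 1
    have hXY : ProbabilityTheory.IndepFun
        (fun ω => (U ω) ^ a * (starRingEnd ℂ (U ω)) ^ b)
        (fun ω => (V ω) ^ (m - a) * (starRingEnd ℂ (V ω)) ^ (m - b)) μ :=
      hUV.comp (φ := fun z : ℂ => z ^ a * (starRingEnd ℂ z) ^ b)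
        (ψ := fun z : ℂ => z ^ (m - a) * (starRingEnd ℂ z) ^ (m - b))
        ((measurable_id.pow_const _).mul (Complex.continuous_conj.measurable.pow_const _))
        ((measurable_id.pow_const _).mul (Complex.continuous_conj.measurable.pow_const _))
    exact indep_integral_mul_complex hXY
      ((hU.pow_const _).mul ((Complex.continuous_conj.measurable.comp hU).pow_const _))
      ((hV.pow_const _).mul ((Complex.continuous_conj.measurable.comp hV).pow_const _))
  -- kill off-diagonal terms
  have hdiag : Ic = ∑ n ∈ Finset.range (m + 1), ((m.choose n : ℂ)) ^ 2 *
      ((∫ ω, (U ω) ^ n * (starRingEnd ℂ (U ω)) ^ n ∂μ) *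
        (∫ ω, (V ω) ^ (m - n) * (starRingEnd ℂ (V ω)) ^ (m - n) ∂μ)) := by
    rw [hIc2]
    refine Finset.sum_congr rfl fun a ha => ?_
    rw [Finset.sum_eq_single_of_mem a ha]
    · ring
    · intro b _ hba
      rw [circ_offdiag hU hUc (Ne.symm hba)]
      ring
  -- identify the diagonal integrals with the real moments
  have hUn : ∀ n : ℕ, (∫ ω, (U ω) ^ n * (starRingEnd ℂ (U ω)) ^ n ∂μ)
      = ((∫ ω, ‖U ω‖ ^ (2 * n) ∂μ : ℝ) : ℂ) := by
    intro n
    calc ∫ ω, (U ω) ^ n * (starRingEnd ℂ (U ω)) ^ n ∂μ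
        = ∫ ω, ((‖U ω‖ ^ (2 * n) : ℝ) : ℂ) ∂μ :=
          integral_congr_ae (Filter.Eventually.of_forall fun ω => (abs_pow_eq (U ω) n).symm)
      _ = _ := integral_ofReal
  have hVn : ∀ n : ℕ, (∫ ω, (V ω) ^ n * (starRingEnd ℂ (V ω)) ^ n ∂μ)
      = ((∫ ω, ‖V ω‖ ^ (2 * n) ∂μ : ℝ) : ℂ) := by
    intro n
    calc ∫ ω, (V ω) ^ n * (starRingEnd ℂ (V ω)) ^ n ∂μ
        = ∫ ω, ((‖V ω‖ ^ (2 * n) : ℝ) : ℂ) ∂μ :=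
          integral_congr_ae (Filter.Eventually.of_forall fun ω => (abs_pow_eq (V ω) n).symm)
      _ = _ := integral_ofReal
  have hW : Ic = ((∫ ω, ‖U ω + V ω‖ ^ (2 * m) ∂μ : ℝ) : ℂ) := by
    calc Ic = ∫ ω, ((‖U ω + V ω‖ ^ (2 * m) : ℝ) : ℂ) ∂μ := by
          rw [hIc]
          exact integral_congr_ae
            (Filter.Eventually.of_forall fun ω => (abs_pow_eq (U ω + V ω) m).symm)
      _ = _ := integral_ofReal
  have final : ((∫ ω, ‖U ω + V ω‖ ^ (2 * m) ∂μ : ℝ) : ℂ)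
      = ((∑ n ∈ Finset.range (m + 1), (m.choose n : ℝ) ^ 2 *
          (∫ ω, ‖U ω‖ ^ (2 * n) ∂μ) *
          (∫ ω, ‖V ω‖ ^ (2 * (m - n)) ∂μ) : ℝ) : ℂ) := by
    rw [← hW, hdiag]
    push_cast
    refine Finset.sum_congr rfl fun n _ => ?_
    rw [hUn n, hVn (m - n)]
    push_cast
    ring
  exact_mod_cast final
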